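/- arXiv:2309.12902 — 3 statements merged into one kernel-verified Lean document; each statement's English description precedes it below -/
import Mathlib

section
/- For a symmetric matrix M and subspace S contained in the column space of M, the M-envelope of S (the intersection of all reducing subspaces of M containing S) exists, is unique, and is itself a reducing subspace of M containing S. -/
open Matrix

/-- The orthogonal projection onto a subspace R of ℝ^q, as an endomorphism. -/
noncomputable def projOn {q : ℕ} (R : Submodule ℝ (EuclideanSpace ℝ (Fin q))) :
    EuclideanSpace ℝ (Fin q) →L[ℝ] EuclideanSpace ℝ (Fin q) :=
  R.subtypeL.comp (R.orthogonalProjectionOnto)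

/-- R reduces M iff M = P_R M P_R + Q_R M Q_R. -/
def Reduces {q : ℕ} (M : EuclideanSpace ℝ (Fin q) →L[ℝ] EuclideanSpace ℝ (Fin q))
    (R : Submodule ℝ (EuclideanSpace ℝ (Fin q))) : Prop :=
  M = (projOn R).comp (M.comp (projOn R)) +
      (ContinuousLinearMap.id ℝ _ - projOn R).comp
        (M.comp (ContinuousLinearMap.id ℝ _ - projOn R))

lemma projOn_eq_self {q : ℕ} {R : Submodule ℝ (EuclideanSpace ℝ (Fin q))}
    {x : EuclideanSpace ℝ (Fin q)} (hx : x ∈ R) : projOn R x = x := by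
  exact (Submodule.starProjection_eq_self_iff (K := R) (v := x)).2 hx

lemma projOn_eq_zero {q : ℕ} {R : Submodule ℝ (EuclideanSpace ℝ (Fin q))}
    {x : EuclideanSpace ℝ (Fin q)} (hx : x ∈ Rᗮ) : projOn R x = 0 := by
  simp [projOn, Submodule.orthogonalProjectionOnto_apply_of_mem_orthogonal hx]

lemma invariant_of_reduces {q : ℕ} {M : EuclideanSpace ℝ (Fin q) →L[ℝ] EuclideanSpace ℝ (Fin q)}
    {R : Submodule ℝ (EuclideanSpace ℝ (Fin q))} (h : Reduces M R)
    {x : EuclideanSpace ℝ (Fin q)} (hx : x ∈ R) : M x ∈ R := by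
  have hx' : projOn R x = x := projOn_eq_self hx
  have := congrArg (fun T : EuclideanSpace ℝ (Fin q) →L[ℝ] EuclideanSpace ℝ (Fin q) => T x) h
  simp only [ContinuousLinearMap.add_apply, ContinuousLinearMap.comp_apply,
    ContinuousLinearMap.sub_apply, ContinuousLinearMap.id_apply, hx', sub_self, map_zero] at this
  rw [this, add_zero]
  exact (R.orthogonalProjectionOnto (M x)).2

lemma reduces_of_invariant {q : ℕ} {M : EuclideanSpace ℝ (Fin q) →L[ℝ] EuclideanSpace ℝ (Fin q)}
    (hM : IsSelfAdjoint M) {R : Submodule ℝ (EuclideanSpace ℝ (Fin q))}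
    (h : ∀ x ∈ R, M x ∈ R) : Reduces M R := by
  have horth : ∀ x ∈ Rᗮ, M x ∈ Rᗮ := by
    intro x hx
    rw [Submodule.mem_orthogonal]
    intro u hu
    calc inner ℝ u (M x) = inner ℝ (M u) x := (hM.isSymmetric u x).symm
    _ = 0 := (Submodule.mem_orthogonal R x).1 hx _ (h u hu)
  refine ContinuousLinearMap.ext fun x => ?_
  have hp : projOn R x ∈ R := by simpa [projOn] using (R.orthogonalProjectionOnto x).2
  have hq : x - projOn R x ∈ Rᗮ := Submodule.sub_starProjection_mem_orthogonal (K := R) x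
  have h1 : projOn R (M (projOn R x)) = M (projOn R x) := projOn_eq_self (h _ hp)
  have h2 : projOn R (M (x - projOn R x)) = 0 := projOn_eq_zero (horth _ hq)
  simp only [ContinuousLinearMap.add_apply, ContinuousLinearMap.comp_apply,
    ContinuousLinearMap.sub_apply, ContinuousLinearMap.id_apply, h1, h2, sub_zero]
  rw [← map_add M]
  congr 1
  abel

/-- For symmetric M and a subspace S contained in the column space (range) of
M, the M-envelope of S -- the intersection of all reducing subspaces of M
containing S -- exists, is unique, and is itself a reducing subspace of M
containing S. -/
theorem stmt_4 {q : ℕ} (M : EuclideanSpace ℝ (Fin q) →L[ℝ] EuclideanSpace ℝ (Fin q))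
    (hM : IsSelfAdjoint M)
    (S : Submodule ℝ (EuclideanSpace ℝ (Fin q)))
    (hS : S ≤ LinearMap.range (M : EuclideanSpace ℝ (Fin q) →ₗ[ℝ] EuclideanSpace ℝ (Fin q))) :
    Reduces M (sInf {R | Reduces M R ∧ S ≤ R}) ∧
    S ≤ sInf {R | Reduces M R ∧ S ≤ R} ∧
    (∃! E : Submodule ℝ (EuclideanSpace ℝ (Fin q)),
      Reduces M E ∧ S ≤ E ∧ ∀ R, Reduces M R → S ≤ R → E ≤ R) := by
  set T := sInf {R | Reduces M R ∧ S ≤ R} with hT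
  have hST : S ≤ T := le_sInf fun R hR => hR.2
  have hRT : Reduces M T := by
    apply reduces_of_invariant hM
    intro x hx
    rw [hT, Submodule.mem_sInf] at hx ⊢
    intro R hR
    exact invariant_of_reduces hR.1 (hx R hR)
  have hmin : ∀ R, Reduces M R → S ≤ R → T ≤ R := fun R h1 h2 => sInf_le ⟨h1, h2⟩
  refine ⟨hRT, hST, T, ⟨hRT, hST, hmin⟩, ?_⟩
  rintro E ⟨hE1, hE2, hE3⟩
  exact le_antisymm (hE3 T hRT hST) (hmin E hE1 hE2)
end

section
/- For a positive definite matrix J and matrices H, R with span(J^{1/2} R) ⊆ span(J^{1/2} H), the difference H(H'JH)^† H' − R(R'JR)^† R' equals J^{-1/2}(P_{J^{1/2}H} − P_{J^{1/2}R})J^{-1/2} and is positive semidefinite, where P_A denotes the orthogonal projection onto the column space of A and † the Moore–Penrose inverse. -/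
open Matrix

/-- G is the Moore–Penrose inverse of A (the four Penrose conditions). -/
def IsMoorePenrose {m n : ℕ} (A : Matrix (Fin m) (Fin n) ℝ)
    (G : Matrix (Fin n) (Fin m) ℝ) : Prop :=
  A * G * A = A ∧ G * A * G = G ∧ (A * G)ᵀ = A * G ∧ (G * A)ᵀ = G * A

open scoped ComplexOrder in
/-- The square root of a positive semidefinite matrix, as defined in the older Mathlib
(removed since). -/
noncomputable def Matrix.PosSemidef.sqrt {n : Type*} {𝕜 : Type*} [Fintype n] [RCLike 𝕜]
    [DecidableEq n] {A : Matrix n n 𝕜} (hA : A.PosSemidef) : Matrix n n 𝕜 :=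
  hA.1.eigenvectorUnitary.1 * diagonal ((↑) ∘ (Real.sqrt ∘ hA.1.eigenvalues)) *
  (star hA.1.eigenvectorUnitary : Matrix n n 𝕜)

open scoped ComplexOrder in
lemma Matrix.PosSemidef.posSemidef_sqrt {n : Type*} {𝕜 : Type*} [Fintype n] [RCLike 𝕜]
    [DecidableEq n] {A : Matrix n n 𝕜} (hA : A.PosSemidef) : hA.sqrt.PosSemidef := by
  unfold Matrix.PosSemidef.sqrt
  apply PosSemidef.mul_mul_conjTranspose_same
  refine posSemidef_diagonal_iff.mpr fun i ↦ ?_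
  rw [Function.comp_apply, RCLike.nonneg_iff]
  constructor
  · simp only [Function.comp_apply, RCLike.ofReal_re]
    exact Real.sqrt_nonneg _
  · simp only [Function.comp_apply, RCLike.ofReal_im]

open scoped ComplexOrder in
lemma Matrix.PosSemidef.sqrt_mul_self {n : Type*} {𝕜 : Type*} [Fintype n] [RCLike 𝕜]
    [DecidableEq n] {A : Matrix n n 𝕜} (hA : A.PosSemidef) : hA.sqrt * hA.sqrt = A := by
  let C : Matrix n n 𝕜 := hA.1.eigenvectorUnitary
  let E := diagonal ((↑) ∘ Real.sqrt ∘ hA.1.eigenvalues : n → 𝕜)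
  suffices C * (E * (star C * C) * E) * star C = A by
    rw [Matrix.PosSemidef.sqrt]
    change (C * E * star C) * (C * E * star C) = A
    simpa only [← mul_assoc] using this
  have : star C * C = 1 := by simp [C]
  rw [this, mul_one]
  have : E * E = diagonal ((↑) ∘ hA.1.eigenvalues) := by
    rw [diagonal_mul_diagonal]
    congr! with v
    simp [← pow_two, ← RCLike.ofReal_pow, Real.sq_sqrt (hA.eigenvalues_nonneg v)]
  rw [this]
  conv_rhs => rw [hA.1.spectral_theorem]
  simp [C, mul_assoc]

lemma mp_unique {a b : ℕ} {A : Matrix (Fin a) (Fin b) ℝ} {G1 G2 : Matrix (Fin b) (Fin a) ℝ}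
    (h1 : IsMoorePenrose A G1) (h2 : IsMoorePenrose A G2) : G1 = G2 := by
  obtain ⟨h11, h12, h13, h14⟩ := h1
  obtain ⟨h21, h22, h23, h24⟩ := h2
  have key1 : A * G1 = A * G2 := by
    calc A * G1 = (A * G1)ᵀ := h13.symm
    _ = G1ᵀ * Aᵀ := by rw [transpose_mul]
    _ = G1ᵀ * (A * G2 * A)ᵀ := by rw [h21]
    _ = G1ᵀ * (Aᵀ * (A * G2)ᵀ) := by simp only [transpose_mul, Matrix.mul_assoc]
    _ = G1ᵀ * (Aᵀ * (A * G2)) := by rw [h23]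
    _ = (A * G1)ᵀ * (A * G2) := by simp only [transpose_mul, Matrix.mul_assoc]
    _ = A * G1 * (A * G2) := by rw [h13]
    _ = (A * G1 * A) * G2 := by simp only [Matrix.mul_assoc]
    _ = A * G2 := by rw [h11]
  have key2 : G1 * A = G2 * A := by
    calc G1 * A = (G1 * A)ᵀ := h14.symm
    _ = Aᵀ * G1ᵀ := by rw [transpose_mul]
    _ = (A * G2 * A)ᵀ * G1ᵀ := by rw [h21]
    _ = (G2 * A)ᵀ * (Aᵀ * G1ᵀ) := by simp only [transpose_mul, Matrix.mul_assoc]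
    _ = G2 * A * (Aᵀ * G1ᵀ) := by rw [h24]
    _ = G2 * A * (G1 * A)ᵀ := by simp only [transpose_mul, Matrix.mul_assoc]
    _ = G2 * A * (G1 * A) := by rw [h14]
    _ = G2 * (A * G1 * A) := by simp only [Matrix.mul_assoc]
    _ = G2 * A := by rw [h11]
  calc G1 = G1 * A * G1 := h12.symm
  _ = G1 * (A * G2) := by rw [Matrix.mul_assoc, ← key1]
  _ = G1 * A * G2 := by rw [Matrix.mul_assoc]
  _ = G2 * A * G2 := by rw [key2]
  _ = G2 := h22

lemma mp_symm {p : ℕ} {M G : Matrix (Fin p) (Fin p) ℝ} (hM : Mᵀ = M)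
    (hG : IsMoorePenrose M G) : Gᵀ = G := by
  obtain ⟨h1, h2, h3, h4⟩ := hG
  have e3 : M * Gᵀ = G * M := by rw [← h4, transpose_mul, hM]
  have e4 : Gᵀ * M = M * G := by rw [← h3, transpose_mul, hM]
  refine mp_unique ?_ ⟨h1, h2, h3, h4⟩
  refine ⟨?_, ?_, ?_, ?_⟩
  · have ht : (M * Gᵀ * M)ᵀ = M := by
      simp only [transpose_mul, transpose_transpose, hM]
      rw [← Matrix.mul_assoc, h1]
    rw [← transpose_transpose (M * Gᵀ * M), ht, hM]
  · have ht : (Gᵀ * M * Gᵀ)ᵀ = G := by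
      simp only [transpose_mul, transpose_transpose, hM]
      rw [← Matrix.mul_assoc, h2]
    rw [← transpose_transpose (Gᵀ * M * Gᵀ), ht]
  · rw [e3]; exact h4
  · rw [e4]; exact h3

lemma proj_mul_self_eq {n k : ℕ} (A : Matrix (Fin n) (Fin k) ℝ)
    (G : Matrix (Fin k) (Fin k) ℝ) (hG : IsMoorePenrose (Aᵀ * A) G) :
    (A * G * Aᵀ) * A = A := by
  obtain ⟨h1, h2, h3, h4⟩ := hG
  set N := G * (Aᵀ * A) with hN
  have hsym : (Aᵀ * A)ᵀ = Aᵀ * A := by rw [transpose_mul, transpose_transpose]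
  have hMN' : Aᵀ * (A * N) = Aᵀ * A := by
    calc Aᵀ * (A * N) = Aᵀ * A * G * (Aᵀ * A) := by
          rw [hN]; simp only [Matrix.mul_assoc]
    _ = Aᵀ * A := h1
  have hMN2 : (Aᵀ * A) * N = Aᵀ * A := by rw [Matrix.mul_assoc, hMN']
  have hNtM' : Nᵀ * (Aᵀ * A) = Aᵀ * A := by
    calc Nᵀ * (Aᵀ * A) = Nᵀ * (Aᵀ * A)ᵀ := by rw [hsym]
    _ = ((Aᵀ * A) * N)ᵀ := (transpose_mul (Aᵀ * A) N).symm
    _ = (Aᵀ * A)ᵀ := by rw [hMN2]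
    _ = Aᵀ * A := hsym
  have key : (A * N - A)ᵀ * (A * N - A) = 0 := by
    have expand : (A * N - A)ᵀ * (A * N - A)
        = Nᵀ * (Aᵀ * (A * N)) - Nᵀ * (Aᵀ * A) - Aᵀ * (A * N) + Aᵀ * A := by
      simp only [transpose_sub, transpose_mul, Matrix.sub_mul, Matrix.mul_sub,
        Matrix.mul_assoc]
      abel
    rw [expand, hMN', hNtM']
    abel
  have hz : A * N - A = 0 := by
    have := (Matrix.conjTranspose_mul_self_eq_zero (A := A * N - A)).mp
    apply this
    rw [conjTranspose_eq_transpose_of_trivial]; exact key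
  have hAN : A * N = A := by rwa [sub_eq_zero] at hz
  calc (A * G * Aᵀ) * A = A * N := by rw [hN]; simp only [Matrix.mul_assoc]
  _ = A := hAN

lemma proj_symm {n k : ℕ} (A : Matrix (Fin n) (Fin k) ℝ)
    (G : Matrix (Fin k) (Fin k) ℝ) (hG : IsMoorePenrose (Aᵀ * A) G) :
    (A * G * Aᵀ)ᵀ = A * G * Aᵀ := by
  have hsym : (Aᵀ * A)ᵀ = Aᵀ * A := by rw [transpose_mul, transpose_transpose]
  have hGsym := mp_symm hsym hG
  simp only [transpose_mul, transpose_transpose, hGsym, Matrix.mul_assoc]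

lemma proj_idem {n k : ℕ} (A : Matrix (Fin n) (Fin k) ℝ)
    (G : Matrix (Fin k) (Fin k) ℝ) (hG : IsMoorePenrose (Aᵀ * A) G) :
    (A * G * Aᵀ) * (A * G * Aᵀ) = A * G * Aᵀ := by
  calc (A * G * Aᵀ) * (A * G * Aᵀ) = ((A * G * Aᵀ) * A) * (G * Aᵀ) := by
        simp only [Matrix.mul_assoc]
  _ = A * (G * Aᵀ) := by rw [proj_mul_self_eq A G hG]
  _ = A * G * Aᵀ := by rw [Matrix.mul_assoc]

/-- For positive definite J and matrices H, R with span(J^{1/2}R) ⊆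
span(J^{1/2}H), the difference H(H'JH)⁺H' − R(R'JR)⁺R' equals
J^{-1/2}(P_{J^{1/2}H} − P_{J^{1/2}R})J^{-1/2} (where for a matrix A,
P_A = A(A'A)⁺A' is the orthogonal projection onto span(A), so that
P_{J^{1/2}H} = J^{1/2}H(H'JH)⁺H'J^{1/2}) and is positive semidefinite. -/
theorem stmt_11 {n k m : ℕ} (J : Matrix (Fin n) (Fin n) ℝ) (hJ : J.PosDef)
    (H : Matrix (Fin n) (Fin k) ℝ) (R : Matrix (Fin n) (Fin m) ℝ)
    (Gh : Matrix (Fin k) (Fin k) ℝ) (Gr : Matrix (Fin m) (Fin m) ℝ)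
    (hGh : IsMoorePenrose (Hᵀ * J * H) Gh) (hGr : IsMoorePenrose (Rᵀ * J * R) Gr)
    (hspan :
      LinearMap.range (hJ.posSemidef.sqrt * R).mulVecLin ≤
        LinearMap.range (hJ.posSemidef.sqrt * H).mulVecLin) :
    H * Gh * Hᵀ - R * Gr * Rᵀ =
      (hJ.posSemidef.sqrt)⁻¹ *
        (hJ.posSemidef.sqrt * H * Gh * Hᵀ * hJ.posSemidef.sqrt -
         hJ.posSemidef.sqrt * R * Gr * Rᵀ * hJ.posSemidef.sqrt) *
        (hJ.posSemidef.sqrt)⁻¹ ∧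
    (H * Gh * Hᵀ - R * Gr * Rᵀ).PosSemidef := by
  set S := hJ.posSemidef.sqrt with hSdef
  have hSsym : Sᵀ = S := by
    rw [← conjTranspose_eq_transpose_of_trivial]
    exact hJ.posSemidef.posSemidef_sqrt.isHermitian
  have hSS : S * S = J := hJ.posSemidef.sqrt_mul_self
  have hdet : IsUnit S.det := by
    have hJdet : (0:ℝ) < J.det := hJ.det_pos
    have : S.det * S.det = J.det := by rw [← det_mul, hSS]
    refine isUnit_iff_ne_zero.mpr fun h => ?_
    rw [h, mul_zero] at this
    rw [← this] at hJdet
    exact lt_irrefl 0 hJdet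
  have hinvl : S⁻¹ * S = 1 := nonsing_inv_mul S hdet
  have hinvr : S * S⁻¹ = 1 := mul_nonsing_inv S hdet
  have hAe : (S * H)ᵀ * (S * H) = Hᵀ * J * H := by
    rw [transpose_mul, hSsym, ← hSS]; simp only [Matrix.mul_assoc]
  have hBe : (S * R)ᵀ * (S * R) = Rᵀ * J * R := by
    rw [transpose_mul, hSsym, ← hSS]; simp only [Matrix.mul_assoc]
  have hGh' : IsMoorePenrose ((S * H)ᵀ * (S * H)) Gh := by rw [hAe]; exact hGh
  have hGr' : IsMoorePenrose ((S * R)ᵀ * (S * R)) Gr := by rw [hBe]; exact hGr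
  set P := (S * H) * Gh * (S * H)ᵀ with hPdef
  set Q := (S * R) * Gr * (S * R)ᵀ with hQdef
  have hPA : P * (S * H) = S * H := proj_mul_self_eq _ _ hGh'
  have hPsym : Pᵀ = P := proj_symm _ _ hGh'
  have hQsym : Qᵀ = Q := proj_symm _ _ hGr'
  have hPP : P * P = P := proj_idem _ _ hGh'
  have hQQ : Q * Q = Q := proj_idem _ _ hGr'
  -- P * (S*R) = S*R using the range hypothesis
  have hPB : P * (S * R) = S * R := by
    have hv : ∀ x, P *ᵥ ((S * R) *ᵥ x) = (S * R) *ᵥ x := by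
      intro x
      obtain ⟨y, hy⟩ := hspan ⟨x, rfl⟩
      simp only [mulVecLin_apply] at hy
      rw [← hy, mulVec_mulVec, hPA]
    ext i j
    have h2 : (P * (S * R)) *ᵥ (Pi.single j 1) = (S * R) *ᵥ (Pi.single j 1) := by
      rw [← mulVec_mulVec]; exact hv _
    have h3 := congrFun h2 i
    rwa [mulVec_single_one, mulVec_single_one] at h3
  have hPQ : P * Q = Q := by
    calc P * Q = (P * (S * R)) * (Gr * (S * R)ᵀ) := by
          rw [hQdef]; simp only [Matrix.mul_assoc]
    _ = (S * R) * (Gr * (S * R)ᵀ) := by rw [hPB]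
    _ = Q := by rw [hQdef]; simp only [Matrix.mul_assoc]
  have hQP : Q * P = Q := by
    calc Q * P = Qᵀ * Pᵀ := by rw [hQsym, hPsym]
    _ = (P * Q)ᵀ := (transpose_mul P Q).symm
    _ = Qᵀ := by rw [hPQ]
    _ = Q := hQsym
  have hD : (P - Q)ᵀ * (P - Q) = P - Q := by
    rw [transpose_sub, hPsym, hQsym, Matrix.sub_mul, Matrix.mul_sub, Matrix.mul_sub,
      hPP, hPQ, hQP, hQQ]
    abel
  have hPSD' : (P - Q).PosSemidef := by
    have h := posSemidef_conjTranspose_mul_self (P - Q)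
    rwa [conjTranspose_eq_transpose_of_trivial, hD] at h
  have conj : ∀ Y : Matrix (Fin n) (Fin n) ℝ, S⁻¹ * (S * Y * S) * S⁻¹ = Y := by
    intro Y
    calc S⁻¹ * (S * Y * S) * S⁻¹ = S⁻¹ * (S * (Y * (S * S⁻¹))) := by
          simp only [Matrix.mul_assoc]
    _ = S⁻¹ * (S * Y) := by rw [hinvr, Matrix.mul_one]
    _ = (S⁻¹ * S) * Y := by rw [Matrix.mul_assoc]
    _ = Y := by rw [hinvl, Matrix.one_mul]
  have e1 : S * H * Gh * Hᵀ * S = S * (H * Gh * Hᵀ) * S := by simp only [Matrix.mul_assoc]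
  have e2 : S * R * Gr * Rᵀ * S = S * (R * Gr * Rᵀ) * S := by simp only [Matrix.mul_assoc]
  have eP : P = S * H * Gh * Hᵀ * S := by
    rw [hPdef, transpose_mul, hSsym]; simp only [Matrix.mul_assoc]
  have eQ : Q = S * R * Gr * Rᵀ * S := by
    rw [hQdef, transpose_mul, hSsym]; simp only [Matrix.mul_assoc]
  have eq1 : H * Gh * Hᵀ - R * Gr * Rᵀ =
      S⁻¹ * (S * H * Gh * Hᵀ * S - S * R * Gr * Rᵀ * S) * S⁻¹ := by
    rw [Matrix.mul_sub, Matrix.sub_mul, e1, e2, conj, conj]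
  refine ⟨eq1, ?_⟩
  have hps := hPSD'.mul_mul_conjTranspose_same (S⁻¹)
  have hH : (S⁻¹)ᴴ = S⁻¹ := by
    rw [conjTranspose_eq_transpose_of_trivial, transpose_nonsing_inv, hSsym]
  rw [hH] at hps
  rw [eq1, ← eP, ← eQ]
  exact hps
end

section
/- For Γ symmetric positive definite of size n and B ∈ R^{d×n} of full row rank with projection P_{B'(Γ)} = B'(BΓB')^{-1}BΓ, the Kronecker products (Q_{B'(Γ)} Γ^{-1}) ⊗ (P_{A(Σ^{-1})} Σ) and (P_{B'(Γ)} Γ^{-1}) ⊗ Σ are both positive semidefinite, where Σ is positive definite, A ∈ R^{q×d} is full column rank, P_{A(Σ^{-1})} = A(A'Σ^{-1}A)^{-1}A'Σ^{-1}, and Q_{B'(Γ)} = I − P_{B'(Γ)}. -/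
set_option maxHeartbeats 1000000

open Matrix
open scoped Kronecker
open scoped MatrixOrder

/-- Kronecker product of PSD real matrices is PSD. -/
lemma kron_posSemidef {m k : ℕ} {M : Matrix (Fin m) (Fin m) ℝ}
    {N : Matrix (Fin k) (Fin k) ℝ} (hM : M.PosSemidef) (hN : N.PosSemidef) :
    (M ⊗ₖ N).PosSemidef := by
  obtain ⟨X, rfl⟩ := CStarAlgebra.nonneg_iff_eq_star_mul_self.mp hM.nonneg
  obtain ⟨Y, rfl⟩ := CStarAlgebra.nonneg_iff_eq_star_mul_self.mp hN.nonneg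
  simp only [Matrix.star_eq_conjTranspose]
  rw [mul_kronecker_mul]
  have h : Xᴴ ⊗ₖ Yᴴ = (X ⊗ₖ Y)ᴴ := by
    simp only [conjTranspose_eq_transpose_of_trivial]
    exact kroneckerMap_transpose _ _ _
  rw [h]
  exact Matrix.posSemidef_conjTranspose_mul_self _

/-- If `B` has full row rank and `Γ` is positive definite, then `B Γ Bᵀ` is positive
definite. -/
lemma posDef_mul_mul_transpose {d n : ℕ} (B : Matrix (Fin d) (Fin n) ℝ)
    (hB : B.rank = d) {Γ : Matrix (Fin n) (Fin n) ℝ} (hΓ : Γ.PosDef) :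
    (B * Γ * Bᵀ).PosDef := by
  have hinj : Function.Injective (Bᵀ.mulVecLin) := by
    rw [← LinearMap.ker_eq_bot]
    have h1 : Module.finrank ℝ (LinearMap.range Bᵀ.mulVecLin) = d := by
      have h : Bᵀ.rank = d := by rw [Matrix.rank_transpose]; exact hB
      exact h
    have h2 := LinearMap.finrank_range_add_finrank_ker Bᵀ.mulVecLin
    rw [h1] at h2
    simp only [Module.finrank_fin_fun] at h2
    have h0 : Module.finrank ℝ (LinearMap.ker Bᵀ.mulVecLin) = 0 := by omega
    exact Submodule.finrank_eq_zero.mp h0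
  rw [posDef_iff_dotProduct_mulVec]
  constructor
  · have hΓs : Γᵀ = Γ := by
      have h : Γᴴ = Γ := hΓ.isHermitian
      rwa [conjTranspose_eq_transpose_of_trivial] at h
    show (B * Γ * Bᵀ)ᴴ = B * Γ * Bᵀ
    rw [conjTranspose_eq_transpose_of_trivial, Matrix.transpose_mul, Matrix.transpose_mul,
      transpose_transpose, hΓs, Matrix.mul_assoc]
  · intro x hx
    have hy : Bᵀ *ᵥ x ≠ 0 := by
      intro h
      exact hx (hinj (by simpa [Matrix.mulVec_transpose] using h))
    have hpos := hΓ.dotProduct_mulVec_pos hy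
    have key : dotProduct (star x) ((B * Γ * Bᵀ) *ᵥ x)
        = dotProduct (star (Bᵀ *ᵥ x)) (Γ *ᵥ (Bᵀ *ᵥ x)) := by
      rw [← Matrix.mulVec_mulVec, ← Matrix.mulVec_mulVec]
      rw [Matrix.dotProduct_mulVec (star x) B]
      congr 1
      ext i
      simp [Matrix.vecMul, Matrix.mulVec, dotProduct, mul_comm]
    rw [key]
    exact hpos

/-- For Γ symmetric positive definite of size n and B of full row rank with
P_{B'(Γ)} = B'(BΓB')⁻¹BΓ, the Kronecker products
(Q_{B'(Γ)} Γ⁻¹) ⊗ (P_{A(Σ⁻¹)} Σ) and (P_{B'(Γ)} Γ⁻¹) ⊗ Σ are both positive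
semidefinite, where Σ is positive definite, A has full column rank,
P_{A(Σ⁻¹)} = A(A'Σ⁻¹A)⁻¹A'Σ⁻¹, and Q_{B'(Γ)} = I − P_{B'(Γ)}. -/
theorem stmt_14 {n q d : ℕ}
    (Γ : Matrix (Fin n) (Fin n) ℝ) (hΓ : Γ.PosDef)
    (Sig : Matrix (Fin q) (Fin q) ℝ) (hSig : Sig.PosDef)
    (A : Matrix (Fin q) (Fin d) ℝ) (hA : A.rank = d)
    (B : Matrix (Fin d) (Fin n) ℝ) (hB : B.rank = d) :
    (((1 - Bᵀ * (B * Γ * Bᵀ)⁻¹ * B * Γ) * Γ⁻¹) ⊗ₖ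
      ((A * (Aᵀ * Sig⁻¹ * A)⁻¹ * Aᵀ * Sig⁻¹) * Sig)).PosSemidef ∧
    (((Bᵀ * (B * Γ * Bᵀ)⁻¹ * B * Γ) * Γ⁻¹) ⊗ₖ Sig).PosSemidef := by
  have hΓu : IsUnit Γ.det := hΓ.det_pos.ne'.isUnit
  have hSigu : IsUnit Sig.det := hSig.det_pos.ne'.isUnit
  have hBGB : (B * Γ * Bᵀ).PosDef := posDef_mul_mul_transpose B hB hΓ
  have hGu : IsUnit (B * Γ * Bᵀ).det := hBGB.det_pos.ne'.isUnit
  set W := (B * Γ * Bᵀ)⁻¹ with hWdef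
  have hW : W.PosDef := hBGB.inv
  have hWsym : Wᵀ = W := by
    have h : Wᴴ = W := hW.isHermitian
    rwa [conjTranspose_eq_transpose_of_trivial] at h
  have hASA : (Aᵀ * Sig⁻¹ * A).PosDef := by
    have h := posDef_mul_mul_transpose Aᵀ (by rw [Matrix.rank_transpose]; exact hA) hSig.inv
    rwa [transpose_transpose] at h
  have e1 : (Bᵀ * W * B * Γ) * Γ⁻¹ = Bᵀ * W * B := by
    rw [Matrix.mul_assoc (Bᵀ * W * B), Matrix.mul_nonsing_inv Γ hΓu, Matrix.mul_one]
  have e2 : (A * (Aᵀ * Sig⁻¹ * A)⁻¹ * Aᵀ * Sig⁻¹) * Sig = A * (Aᵀ * Sig⁻¹ * A)⁻¹ * Aᵀ := by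
    rw [Matrix.mul_assoc (A * (Aᵀ * Sig⁻¹ * A)⁻¹ * Aᵀ), Matrix.nonsing_inv_mul Sig hSigu,
      Matrix.mul_one]
  have e3 : (1 - Bᵀ * W * B * Γ) * Γ⁻¹ = Γ⁻¹ - Bᵀ * W * B := by
    rw [Matrix.sub_mul, Matrix.one_mul, e1]
  -- square root of Γ
  set S := CFC.sqrt Γ with hSdef
  have hS2 : S * S = Γ := CFC.sqrt_mul_sqrt_self Γ hΓ.posSemidef.nonneg
  have hSsym : Sᵀ = S := by
    have h : Sᴴ = S := (CFC.sqrt_nonneg Γ).posSemidef.isHermitian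
    rwa [conjTranspose_eq_transpose_of_trivial] at h
  have hSu : IsUnit S.det := by
    have h : S.det * S.det = Γ.det := by rw [← Matrix.det_mul, hS2]
    exact isUnit_of_mul_isUnit_left (h ▸ hΓu)
  have hSl : S⁻¹ * S = 1 := Matrix.nonsing_inv_mul S hSu
  have hSr : S * S⁻¹ = 1 := Matrix.mul_nonsing_inv S hSu
  have hGinv : Γ⁻¹ = S⁻¹ * S⁻¹ := by rw [← hS2, Matrix.mul_inv_rev]
  set P := S * (Bᵀ * W * B) * S with hPdef
  have hPsym : Pᵀ = P := by
    rw [hPdef, Matrix.transpose_mul, Matrix.transpose_mul, Matrix.transpose_mul,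
      Matrix.transpose_mul, transpose_transpose, hSsym, hWsym]
    simp only [Matrix.mul_assoc]
  have hcan : ∀ (X : Matrix (Fin d) (Fin n) ℝ), B * (Γ * (Bᵀ * (W * X))) = X := by
    intro X
    have h : B * Γ * Bᵀ * W = 1 := Matrix.mul_nonsing_inv _ hGu
    calc B * (Γ * (Bᵀ * (W * X))) = (B * Γ * Bᵀ * W) * X := by
          simp only [Matrix.mul_assoc]
      _ = X := by rw [h, Matrix.one_mul]
  have hSS : ∀ (X : Matrix (Fin n) (Fin n) ℝ), S * (S * X) = Γ * X := by
    intro X; rw [← Matrix.mul_assoc, hS2]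
  have hPP : P * P = P := by
    simp only [hPdef, Matrix.mul_assoc]
    rw [hSS, hcan]
  have eq4 : S⁻¹ * (1 - P) * S⁻¹ = Γ⁻¹ - Bᵀ * W * B := by
    rw [Matrix.mul_sub, Matrix.mul_one, Matrix.sub_mul, hGinv]
    congr 1
    simp only [hPdef, Matrix.mul_assoc]
    rw [hSr, Matrix.mul_one, ← Matrix.mul_assoc, hSl, Matrix.one_mul]
  have hQ : (Γ⁻¹ - Bᵀ * W * B).PosSemidef := by
    have hIP : (1 - P) * (1 - P) = 1 - P := by
      rw [Matrix.sub_mul, Matrix.mul_sub, Matrix.mul_sub, Matrix.mul_one, Matrix.one_mul, hPP]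
      rw [Matrix.mul_one, sub_self, sub_zero]
    have hIPs : (1 - P)ᴴ = 1 - P := by
      rw [conjTranspose_eq_transpose_of_trivial, Matrix.transpose_sub, Matrix.transpose_one, hPsym]
    have h := Matrix.posSemidef_conjTranspose_mul_self (1 - P)
    rw [hIPs, hIP] at h
    have h2 := h.mul_mul_conjTranspose_same S⁻¹
    rw [conjTranspose_eq_transpose_of_trivial, Matrix.transpose_nonsing_inv, hSsym] at h2
    rwa [eq4] at h2
  have hN : (A * (Aᵀ * Sig⁻¹ * A)⁻¹ * Aᵀ).PosSemidef := by
    have h := (hASA.inv.posSemidef).mul_mul_conjTranspose_same A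
    rwa [conjTranspose_eq_transpose_of_trivial] at h
  have hM2 : (Bᵀ * W * B).PosSemidef := by
    have h := hW.posSemidef.mul_mul_conjTranspose_same Bᵀ
    rwa [conjTranspose_eq_transpose_of_trivial, transpose_transpose] at h
  refine ⟨?_, ?_⟩
  · rw [e3, e2]
    exact kron_posSemidef hQ hN
  · rw [e1]
    exact kron_posSemidef hM2 hSig.posSemidef
end
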